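/- For every n ∈ {1,…,d}: S_n ⊆ dom(Φ_n), for every τ̄ ∈ S_n one has Φ_n(τ̄) ∈ S_{n+1}, and Φ_n is n-stable on S_n, i.e., Φ_n(τ̄)_i = τ_i for every τ̄ ∈ S_n and every i ∈ {1,…,n−1}. -/

import Mathlib

open scoped Classical

/-- `Δ(τ̄)_i = δ(τ₁,…,τ_{i−1},τ_i,τ_i,…,τ_i)` (with 0-based indices, the `j`-th
argument of `δ` is `τ_{min i j}`). -/
def Delta {V : Type*} [CompleteLattice V] {d : ℕ} (δ : (Fin d → V) → V)
    (τ : Fin d → V) : Fin d → V :=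
  fun i => δ (fun j => τ (min i j))

/-- `δ` is chain-continuous: it commutes with suprema and infima of nonempty chains. -/
def ChainContinuous {V : Type*} [CompleteLattice V] {d : ℕ} (δ : (Fin d → V) → V) : Prop :=
  ∀ C : Set (Fin d → V), C.Nonempty → IsChain (· ≤ ·) C →
    δ (sSup C) = sSup (δ '' C) ∧ δ (sInf C) = sInf (δ '' C)

/-- The parity order `1 ≺ 3 ≺ 5 ≺ ⋯ ≺ 6 ≺ 4 ≺ 2` (on positive naturals). -/
def ParityLE (m n : ℕ) : Prop :=
  (Odd m ∧ Even n) ∨ (Odd m ∧ Odd n ∧ m ≤ n) ∨ (Even m ∧ Even n ∧ n ≤ m)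

/-- `τ̄` is ordered: `τ_i ≤ τ_j` whenever `i ⪯ j` in the parity order
(1-based positions). -/
def IsOrdered {V : Type*} [CompleteLattice V] {d : ℕ} (τ : Fin d → V) : Prop :=
  ∀ i j : Fin d, ParityLE (i.val + 1) (j.val + 1) → τ i ≤ τ j

/-- `τ̄` is `n`-fixed: all coordinates at 1-based positions `≥ n` are equal
(to the coordinate at position `n`). -/
def IsNFixed {V : Type*} {d : ℕ} (n : ℕ) (τ : Fin d → V) : Prop :=
  ∀ i j : Fin d, n ≤ i.val + 1 → n ≤ j.val + 1 → τ i = τ j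

/-- `τ̄` is `n`-saturated: `Δ(τ̄)_i = τ_i` for all 1-based positions `i ≤ n − 1`. -/
def IsNSaturated {V : Type*} [CompleteLattice V] {d : ℕ} (δ : (Fin d → V) → V)
    (n : ℕ) (τ : Fin d → V) : Prop :=
  ∀ i : Fin d, i.val + 2 ≤ n → Delta δ τ i = τ i

/-- The set `S_n ⊆ V^d`. -/
def SN {V : Type*} [CompleteLattice V] {d : ℕ} (δ : (Fin d → V) → V) (n : ℕ) :
    Set (Fin d → V) :=
  {τ | IsOrdered τ ∧ IsNFixed n τ ∧ IsNSaturated δ n τ ∧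
    (Odd n → τ ≤ Delta δ τ) ∧ (Even n → Delta δ τ ≤ τ)}

/-- `Bid_n(τ̄)_i = τ_i` for `i ≤ n−1` and `= τ_{n−2}` for `i ≥ n`
(with `τ₋₁ = ⊥`, `τ₀ = ⊤`; 1-based positions). -/
def Bid {V : Type*} [CompleteLattice V] {d : ℕ} (n : ℕ) (τ : Fin d → V) : Fin d → V :=
  fun i =>
    if i.val + 2 ≤ n then τ i
    else if n = 1 then ⊥
    else if n = 2 then ⊤
    else if h : n - 3 < d then τ ⟨n - 3, h⟩ else ⊥

/-- `Cut_n(τ̄)_i = τ_i` for `i ≤ n−1` and `= τ_{n+1}` for `i ≥ n` (1-based positions). -/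
def Cut {V : Type*} [CompleteLattice V] {d : ℕ} (n : ℕ) (τ : Fin d → V) : Fin d → V :=
  fun i =>
    if i.val + 2 ≤ n then τ i
    else if h : n < d then τ ⟨n, h⟩ else ⊥

/-- A partial function `X ⇀ X`, given by a total function together with a domain. -/
structure PFunc (X : Type*) where
  toFun : X → X
  dom : Set X

/-- A total function, seen as a partial function. -/
def PFunc.total {X : Type*} (f : X → X) : PFunc X := ⟨f, Set.univ⟩

/-- The set of fixed points of a partial function. -/
def PFunc.Fix {X : Type*} (F : PFunc X) : Set X := {x | x ∈ F.dom ∧ F.toFun x = x}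

/-- Composition `F;G : x ↦ G(F(x))` of partial functions. -/
def PFunc.comp {X : Type*} (F G : PFunc X) : PFunc X :=
  ⟨fun x => G.toFun (F.toFun x), {x | x ∈ F.dom ∧ F.toFun x ∈ G.dom}⟩

/-- `lim↑F` maps `x` to the least fixed point of `F` that is `≥ x`; its domain is
the set of `x` for which such a least fixed point exists. -/
noncomputable def limUp {X : Type*} [PartialOrder X] (F : PFunc X) : PFunc X where
  toFun x := if h : ∃ y, IsLeast {z | z ∈ F.Fix ∧ x ≤ z} y then h.choose else x
  dom := {x | ∃ y, IsLeast {z | z ∈ F.Fix ∧ x ≤ z} y}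

/-- `lim↓F` maps `x` to the greatest fixed point of `F` that is `≤ x`. -/
noncomputable def limDown {X : Type*} [PartialOrder X] (F : PFunc X) : PFunc X where
  toFun x := if h : ∃ y, IsGreatest {z | z ∈ F.Fix ∧ z ≤ x} y then h.choose else x
  dom := {x | ∃ y, IsGreatest {z | z ∈ F.Fix ∧ z ≤ x} y}

/-- A partial function is monotone (order-preserving on its domain). -/
def MonotonePF {X : Type*} [Preorder X] (F : PFunc X) : Prop :=
  ∀ x ∈ F.dom, ∀ y ∈ F.dom, x ≤ y → F.toFun x ≤ F.toFun y

/-- `A` is a chain-complete subset: every nonempty chain contained in `A` has a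
supremum and an infimum (in `X`) which belong to `A`. -/
def ChainCompleteIn {X : Type*} [Preorder X] (A : Set X) : Prop :=
  ∀ C : Set X, C ⊆ A → C.Nonempty → IsChain (· ≤ ·) C →
    (∃ y ∈ A, IsLUB C y) ∧ (∃ y ∈ A, IsGLB C y)

/-- A monotone partial function `F` is ascending on `A`. -/
def AscendingOn {X : Type*} [Preorder X] (F : PFunc X) (A : Set X) : Prop :=
  MonotonePF F ∧ A ⊆ F.dom ∧ ChainCompleteIn A ∧ ∀ x ∈ A, F.toFun x ∈ A ∧ x ≤ F.toFun x

/-- A monotone partial function `F` is descending on `A`. -/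
def DescendingOn {X : Type*} [Preorder X] (F : PFunc X) (A : Set X) : Prop :=
  MonotonePF F ∧ A ⊆ F.dom ∧ ChainCompleteIn A ∧ ∀ x ∈ A, F.toFun x ∈ A ∧ F.toFun x ≤ x

/-- `F` is `n`-stable on `A`: `A ⊆ dom(F)` and `F` preserves the coordinates at
1-based positions `≤ n − 1` of every element of `A`. -/
def NStableOn {V : Type*} {d : ℕ} (F : PFunc (Fin d → V)) (n : ℕ)
    (A : Set (Fin d → V)) : Prop :=
  A ⊆ F.dom ∧ ∀ τ ∈ A, ∀ i : Fin d, i.val + 2 ≤ n → F.toFun τ i = τ i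

/-- `PhiAux δ k = Φ_{d−k}`: the formulae `Φ_n`, defined by downward recursion
`Φ_d = Bid_d ; lim↓Δ` and, for `n ≤ d−1`,
`Φ_n = Bid_n ; lim↑(lim↑Δ ; Φ_{n+1} ; Cut_n)` if `n` is odd, and
`Φ_n = Bid_n ; lim↓(lim↓Δ ; Φ_{n+1} ; Cut_n)` if `n` is even. -/
noncomputable def PhiAux {V : Type*} [CompleteLattice V] {d : ℕ}
    (δ : (Fin d → V) → V) : ℕ → PFunc (Fin d → V)
  | 0 => (PFunc.total (Bid d)).comp (limDown (PFunc.total (Delta δ)))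
  | (k + 1) =>
      if Odd (d - (k + 1)) then
        (PFunc.total (Bid (d - (k + 1)))).comp
          (limUp (((limUp (PFunc.total (Delta δ))).comp (PhiAux δ k)).comp
            (PFunc.total (Cut (d - (k + 1))))))
      else
        (PFunc.total (Bid (d - (k + 1)))).comp
          (limDown (((limDown (PFunc.total (Delta δ))).comp (PhiAux δ k)).comp
            (PFunc.total (Cut (d - (k + 1))))))

/-- The partial function `Φ_n : V^d ⇀ V^d`. -/
noncomputable def Phi {V : Type*} [CompleteLattice V] {d : ℕ}
    (δ : (Fin d → V) → V) (n : ℕ) : PFunc (Fin d → V) :=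
  PhiAux δ (d - n)

universe u

section Generic

variable {X : Type*}

theorem limUp_toFun_eq [PartialOrder X] {F : PFunc X} {x y : X}
    (h : IsLeast {z | z ∈ F.Fix ∧ x ≤ z} y) : (limUp F).toFun x = y := by
  have hex : ∃ y', IsLeast {z | z ∈ F.Fix ∧ x ≤ z} y' := ⟨y, h⟩
  simp only [limUp, dif_pos hex]
  exact hex.choose_spec.unique h

theorem limDown_toFun_eq [PartialOrder X] {F : PFunc X} {x y : X}
    (h : IsGreatest {z | z ∈ F.Fix ∧ z ≤ x} y) : (limDown F).toFun x = y := by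
  have hex : ∃ y', IsGreatest {z | z ∈ F.Fix ∧ z ≤ x} y' := ⟨y, h⟩
  simp only [limDown, dif_pos hex]
  exact hex.choose_spec.unique h

theorem monotonePF_total [Preorder X] {f : X → X} (hf : Monotone f) :
    MonotonePF (PFunc.total f) := fun x _ y _ h => hf h

theorem monotonePF_comp [Preorder X] {F G : PFunc X} (hF : MonotonePF F)
    (hG : MonotonePF G) : MonotonePF (F.comp G) := fun x hx y hy h =>
  hG _ hx.2 _ hy.2 (hF _ hx.1 _ hy.1 h)

theorem monotonePF_limUp [PartialOrder X] (F : PFunc X) : MonotonePF (limUp F) := by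
  intro x hx y hy hxy
  obtain ⟨lx, hlx⟩ := hx
  obtain ⟨ly, hly⟩ := hy
  rw [show (limUp F).toFun x = lx from limUp_toFun_eq hlx,
    show (limUp F).toFun y = ly from limUp_toFun_eq hly]
  exact hlx.2 ⟨hly.1.1, le_trans hxy hly.1.2⟩

theorem monotonePF_limDown [PartialOrder X] (F : PFunc X) : MonotonePF (limDown F) := by
  intro x hx y hy hxy
  obtain ⟨lx, hlx⟩ := hx
  obtain ⟨ly, hly⟩ := hy
  rw [show (limDown F).toFun x = lx from limDown_toFun_eq hlx,
    show (limDown F).toFun y = ly from limDown_toFun_eq hly]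
  exact hly.2 ⟨hlx.1.1, le_trans hlx.1.2 hxy⟩

theorem kleene_up [CompleteLattice X] {f : X → X} (hf : Monotone f)
    (hc : ∀ C : Set X, C.Nonempty → IsChain (· ≤ ·) C → f (sSup C) = sSup (f '' C))
    {x : X} (hx : x ≤ f x) {B : Set X} (hxB : x ∈ B)
    (hBf : ∀ z ∈ B, f z ∈ B)
    (hBsup : ∀ C ⊆ B, C.Nonempty → IsChain (· ≤ ·) C → sSup C ∈ B) :
    ∃ y ∈ B, IsLeast {z | z ∈ (PFunc.total f).Fix ∧ x ≤ z} y := by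
  set g : ℕ → X := fun k => f^[k] x with hg
  have hg0 : g 0 = x := rfl
  have hstep : ∀ k, g (k + 1) = f (g k) := fun k => Function.iterate_succ_apply' f k x
  have hmonog : Monotone g := by
    apply monotone_nat_of_le_succ
    intro k
    induction k with
    | zero => rw [hstep, hg0]; exact hx
    | succ k ih => rw [hstep, hstep]; exact hf ih
  set C := Set.range g with hC
  have hCne : C.Nonempty := ⟨x, ⟨0, rfl⟩⟩
  have hCchain : IsChain (· ≤ ·) C := by
    rintro _ ⟨a, rfl⟩ _ ⟨b, rfl⟩ _
    rcases le_total a b with h | h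
    · exact Or.inl (hmonog h)
    · exact Or.inr (hmonog h)
  have hCB : C ⊆ B := by
    rintro _ ⟨k, rfl⟩
    induction k with
    | zero => exact hxB
    | succ k ih => rw [hstep]; exact hBf _ ih
  have hfy : f (sSup C) = sSup C := by
    rw [hc C hCne hCchain]
    apply le_antisymm
    · apply sSup_le
      rintro _ ⟨_, ⟨k, rfl⟩, rfl⟩
      rw [← hstep]
      exact le_sSup ⟨k + 1, rfl⟩
    · apply sSup_le
      rintro _ ⟨k, rfl⟩
      refine le_trans (hmonog (Nat.le_succ k)) ?_
      rw [hstep]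
      exact le_sSup ⟨g k, ⟨k, rfl⟩, rfl⟩
  refine ⟨sSup C, hBsup C hCB hCne hCchain, ⟨⟨Set.mem_univ _, hfy⟩, le_sSup ⟨0, rfl⟩⟩, ?_⟩
  rintro z ⟨⟨-, hz⟩, hxz⟩
  apply sSup_le
  rintro _ ⟨k, rfl⟩
  induction k with
  | zero => exact hxz
  | succ k ih => rw [hstep, ← hz]; exact hf ih

theorem kleene_down [CompleteLattice X] {f : X → X} (hf : Monotone f)
    (hc : ∀ C : Set X, C.Nonempty → IsChain (· ≤ ·) C → f (sInf C) = sInf (f '' C))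
    {x : X} (hx : f x ≤ x) {B : Set X} (hxB : x ∈ B)
    (hBf : ∀ z ∈ B, f z ∈ B)
    (hBinf : ∀ C ⊆ B, C.Nonempty → IsChain (· ≤ ·) C → sInf C ∈ B) :
    ∃ y ∈ B, IsGreatest {z | z ∈ (PFunc.total f).Fix ∧ z ≤ x} y := by
  set g : ℕ → X := fun k => f^[k] x with hg
  have hg0 : g 0 = x := rfl
  have hstep : ∀ k, g (k + 1) = f (g k) := fun k => Function.iterate_succ_apply' f k x
  have hmonog : Antitone g := by
    apply antitone_nat_of_succ_le
    intro k
    induction k with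
    | zero => rw [hstep, hg0]; exact hx
    | succ k ih => rw [hstep, hstep]; exact hf (by rw [← hstep]; exact ih)
  set C := Set.range g with hC
  have hCne : C.Nonempty := ⟨x, ⟨0, rfl⟩⟩
  have hCchain : IsChain (· ≤ ·) C := by
    rintro _ ⟨a, rfl⟩ _ ⟨b, rfl⟩ _
    rcases le_total a b with h | h
    · exact Or.inr (hmonog h)
    · exact Or.inl (hmonog h)
  have hCB : C ⊆ B := by
    rintro _ ⟨k, rfl⟩
    induction k with
    | zero => exact hxB
    | succ k ih => rw [hstep]; exact hBf _ ih
  have hfy : f (sInf C) = sInf C := by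
    rw [hc C hCne hCchain]
    apply le_antisymm
    · apply le_sInf
      rintro _ ⟨k, rfl⟩
      refine le_trans ?_ (hmonog (Nat.le_succ k))
      rw [hstep]
      exact sInf_le ⟨g k, ⟨k, rfl⟩, rfl⟩
    · apply le_sInf
      rintro _ ⟨_, ⟨k, rfl⟩, rfl⟩
      rw [← hstep]
      exact sInf_le ⟨k + 1, rfl⟩
  refine ⟨sInf C, hBinf C hCB hCne hCchain, ⟨⟨Set.mem_univ _, hfy⟩, sInf_le ⟨0, rfl⟩⟩, ?_⟩
  rintro z ⟨⟨-, hz⟩, hxz⟩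
  apply le_sInf
  rintro _ ⟨k, rfl⟩
  induction k with
  | zero => exact hxz
  | succ k ih => rw [hstep, ← hz]; exact hf ih

end Generic
section Transfinite

noncomputable def ordIter {X : Type u} [CompleteLattice X] (f : X → X) (σ : X) :
    Ordinal.{u} → X :=
  Ordinal.lt_wf.fix fun o ih =>
    sSup ({σ} ∪ {x | ∃ a : Ordinal, ∃ h : a < o, x = f (ih a h)})

theorem ordIter_eq {X : Type u} [CompleteLattice X] (f : X → X) (σ : X) (o : Ordinal.{u}) :
    ordIter f σ o =
      sSup ({σ} ∪ {x | ∃ a : Ordinal, ∃ _ : a < o, x = f (ordIter f σ a)}) := by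
  conv_lhs => rw [ordIter, WellFounded.fix_eq]
  rfl

theorem exists_lfp_above {X : Type u} [CompleteLattice X] {F : PFunc X} {A : Set X}
    (hF : AscendingOn F A) {σ : X} (hσ : σ ∈ A) :
    ∃ y ∈ A, IsLeast {z | z ∈ F.Fix ∧ σ ≤ z} y := by
  obtain ⟨hmono, hdom, hcc, hasc⟩ := hF
  set s : Ordinal.{u} → X := ordIter F.toFun σ with hs
  have hs0 : s 0 = σ := by
    rw [show s 0 = _ from ordIter_eq F.toFun σ 0]
    have : ({σ} ∪ {x | ∃ a : Ordinal, ∃ _ : a < (0:Ordinal.{u}), x = F.toFun (s a)})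
        = ({σ} : Set X) := by
      ext t; simp [not_lt_zero]
    rw [this, sSup_singleton]
  have key : ∀ o : Ordinal.{u}, s o ∈ A ∧ s o ≤ F.toFun (s o) ∧ ∀ a ≤ o, s a ≤ s o := by
    intro o
    induction o using Ordinal.induction with
    | h o IH =>
    have hso : s o = sSup ({σ} ∪ {x | ∃ a : Ordinal, ∃ _ : a < o, x = F.toFun (s a)}) :=
      ordIter_eq F.toFun σ o
    have hTA : ({σ} ∪ {x | ∃ a : Ordinal, ∃ _ : a < o, x = F.toFun (s a)}) ⊆ A := by
      rintro t (rfl | ⟨a, ha, rfl⟩)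
      · exact hσ
      · exact (hasc _ (IH a ha).1).1
    have hTne : ({σ} ∪ {x | ∃ a : Ordinal, ∃ _ : a < o, x = F.toFun (s a)}).Nonempty :=
      ⟨σ, Or.inl rfl⟩
    have hσle : ∀ a, a < o → σ ≤ F.toFun (s a) := by
      intro a ha
      have h1 : s 0 ≤ s a := (IH a ha).2.2 0 (zero_le (a := a))
      rw [hs0] at h1
      exact le_trans h1 (IH a ha).2.1
    have hchain : IsChain (· ≤ ·) ({σ} ∪ {x | ∃ a : Ordinal, ∃ _ : a < o, x = F.toFun (s a)}) := by
      rintro t (rfl | ⟨a, ha, rfl⟩) u (rfl | ⟨b, hb, rfl⟩) hne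
      · exact Or.inl le_rfl
      · exact Or.inl (hσle b hb)
      · exact Or.inr (hσle a ha)
      · rcases le_total a b with h | h
        · exact Or.inl (hmono _ (hdom (IH a ha).1) _ (hdom (IH b hb).1) ((IH b hb).2.2 a h))
        · exact Or.inr (hmono _ (hdom (IH b hb).1) _ (hdom (IH a ha).1) ((IH a ha).2.2 b h))
    obtain ⟨⟨y, hyA, hylub⟩, -⟩ := hcc _ hTA hTne hchain
    have hsoy : s o = y := by rw [hso, hylub.sSup_eq]
    have hmonoo : ∀ a ≤ o, s a ≤ s o := by
      intro a hao
      rcases eq_or_lt_of_le hao with rfl | halt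
      · exact le_rfl
      · rw [hso]
        exact le_trans (IH a halt).2.1 (le_sSup (Or.inr ⟨a, halt, rfl⟩))
    refine ⟨hsoy ▸ hyA, ?_, hmonoo⟩
    conv_lhs => rw [hso]
    apply sSup_le
    rintro t (ht | ⟨a, ha, rfl⟩)
    · rw [ht]
      have h1 : σ ≤ F.toFun σ := (hasc σ hσ).2
      refine le_trans h1 (hmono _ (hdom hσ) _ (hdom (hsoy ▸ hyA)) ?_)
      rw [← hs0]
      exact hmonoo 0 (zero_le (a := o))
    · exact hmono _ (hdom (IH a ha).1) _ (hdom (hsoy ▸ hyA)) (hmonoo a ha.le)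
  have hsucc : ∀ o : Ordinal.{u}, s (Order.succ o) = F.toFun (s o) := by
    intro o
    rw [show s (Order.succ o) = _ from ordIter_eq F.toFun σ (Order.succ o)]
    apply le_antisymm
    · apply sSup_le
      rintro t (rfl | ⟨a, ha, rfl⟩)
      · have h1 : s 0 ≤ s o := (key o).2.2 0 (zero_le (a := o))
        rw [hs0] at h1
        exact le_trans h1 (key o).2.1
      · exact hmono _ (hdom (key a).1) _ (hdom (key o).1)
          ((key o).2.2 a (Order.lt_succ_iff.mp ha))
    · exact le_sSup (Or.inr ⟨o, Order.lt_succ o, rfl⟩)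
  have hstab : ∃ o : Ordinal.{u}, F.toFun (s o) = s o := by
    by_contra hcon
    push_neg at hcon
    have hsm : ∀ a b : Ordinal.{u}, a < b → s a < s b := by
      intro a b hab
      have h1 : s a ≤ s (Order.succ a) := by
        rw [hsucc]; exact (key a).2.1
      have h2 : s a ≠ s (Order.succ a) := by
        intro h
        exact hcon a (by rw [← hsucc, ← h])
      exact lt_of_lt_of_le (lt_of_le_of_ne h1 h2)
        ((key b).2.2 _ (Order.succ_le_of_lt hab))
    have hinj : Function.Injective s := by
      intro a b hab
      rcases lt_trichotomy a b with h | h | h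
      · exact absurd hab (hsm a b h).ne
      · exact h
      · exact absurd hab.symm (hsm b a h).ne
    exact not_small_ordinal.{u} (small_of_injective hinj)
  obtain ⟨o, ho⟩ := hstab
  refine ⟨s o, (key o).1, ⟨⟨hdom (key o).1, ho⟩, ?_⟩, ?_⟩
  · rw [← hs0]; exact (key o).2.2 0 (zero_le (a := o))
  · rintro z ⟨⟨hzdom, hzfix⟩, hσz⟩
    have : ∀ a : Ordinal.{u}, s a ≤ z := by
      intro a
      induction a using Ordinal.induction with
      | h a IH =>
      rw [show s a = _ from ordIter_eq F.toFun σ a]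
      apply sSup_le
      rintro t (rfl | ⟨b, hb, rfl⟩)
      · exact hσz
      · rw [← hzfix]
        exact hmono _ (hdom (key b).1) _ hzdom (IH b hb)
    exact this o

end Transfinite
section TransfiniteDown

noncomputable def ordIterD {X : Type u} [CompleteLattice X] (f : X → X) (σ : X) :
    Ordinal.{u} → X :=
  Ordinal.lt_wf.fix fun o ih =>
    sInf ({σ} ∪ {x | ∃ a : Ordinal, ∃ h : a < o, x = f (ih a h)})

theorem ordIterD_eq {X : Type u} [CompleteLattice X] (f : X → X) (σ : X) (o : Ordinal.{u}) :
    ordIterD f σ o =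
      sInf ({σ} ∪ {x | ∃ a : Ordinal, ∃ _ : a < o, x = f (ordIterD f σ a)}) := by
  conv_lhs => rw [ordIterD, WellFounded.fix_eq]
  rfl

theorem exists_gfp_below {X : Type u} [CompleteLattice X] {F : PFunc X} {A : Set X}
    (hF : DescendingOn F A) {σ : X} (hσ : σ ∈ A) :
    ∃ y ∈ A, IsGreatest {z | z ∈ F.Fix ∧ z ≤ σ} y := by
  obtain ⟨hmono, hdom, hcc, hasc⟩ := hF
  set s : Ordinal.{u} → X := ordIterD F.toFun σ with hs
  have hs0 : s 0 = σ := by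
    rw [show s 0 = _ from ordIterD_eq F.toFun σ 0]
    have : ({σ} ∪ {x | ∃ a : Ordinal, ∃ _ : a < (0:Ordinal.{u}), x = F.toFun (s a)})
        = ({σ} : Set X) := by
      ext t; simp [not_lt_zero]
    rw [this, sInf_singleton]
  have key : ∀ o : Ordinal.{u}, s o ∈ A ∧ F.toFun (s o) ≤ s o ∧ ∀ a ≤ o, s o ≤ s a := by
    intro o
    induction o using Ordinal.induction with
    | h o IH =>
    have hso : s o = sInf ({σ} ∪ {x | ∃ a : Ordinal, ∃ _ : a < o, x = F.toFun (s a)}) :=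
      ordIterD_eq F.toFun σ o
    have hTA : ({σ} ∪ {x | ∃ a : Ordinal, ∃ _ : a < o, x = F.toFun (s a)}) ⊆ A := by
      rintro t (rfl | ⟨a, ha, rfl⟩)
      · exact hσ
      · exact (hasc _ (IH a ha).1).1
    have hTne : ({σ} ∪ {x | ∃ a : Ordinal, ∃ _ : a < o, x = F.toFun (s a)}).Nonempty :=
      ⟨σ, Or.inl rfl⟩
    have hσle : ∀ a, a < o → F.toFun (s a) ≤ σ := by
      intro a ha
      have h1 : s a ≤ s 0 := (IH a ha).2.2 0 (zero_le (a := a))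
      rw [hs0] at h1
      exact le_trans (IH a ha).2.1 h1
    have hchain : IsChain (· ≤ ·) ({σ} ∪ {x | ∃ a : Ordinal, ∃ _ : a < o, x = F.toFun (s a)}) := by
      rintro t (rfl | ⟨a, ha, rfl⟩) u (rfl | ⟨b, hb, rfl⟩) hne
      · exact Or.inl le_rfl
      · exact Or.inr (hσle b hb)
      · exact Or.inl (hσle a ha)
      · rcases le_total a b with h | h
        · exact Or.inr (hmono _ (hdom (IH b hb).1) _ (hdom (IH a ha).1) ((IH b hb).2.2 a h))
        · exact Or.inl (hmono _ (hdom (IH a ha).1) _ (hdom (IH b hb).1) ((IH a ha).2.2 b h))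
    obtain ⟨-, ⟨y, hyA, hyglb⟩⟩ := hcc _ hTA hTne hchain
    have hsoy : s o = y := by rw [hso, hyglb.sInf_eq]
    have hmonoo : ∀ a ≤ o, s o ≤ s a := by
      intro a hao
      rcases eq_or_lt_of_le hao with rfl | halt
      · exact le_rfl
      · rw [hso]
        exact le_trans (sInf_le (Or.inr ⟨a, halt, rfl⟩)) (IH a halt).2.1
    refine ⟨hsoy ▸ hyA, ?_, hmonoo⟩
    conv_rhs => rw [hso]
    apply le_sInf
    rintro t (ht | ⟨a, ha, rfl⟩)
    · rw [ht]
      have h1 : F.toFun σ ≤ σ := (hasc σ hσ).2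
      refine le_trans (hmono _ (hdom (hsoy ▸ hyA)) _ (hdom hσ) ?_) h1
      rw [← hs0]
      exact hmonoo 0 (zero_le (a := o))
    · exact hmono _ (hdom (hsoy ▸ hyA)) _ (hdom (IH a ha).1) (hmonoo a ha.le)
  have hsucc : ∀ o : Ordinal.{u}, s (Order.succ o) = F.toFun (s o) := by
    intro o
    rw [show s (Order.succ o) = _ from ordIterD_eq F.toFun σ (Order.succ o)]
    apply le_antisymm
    · exact sInf_le (Or.inr ⟨o, Order.lt_succ o, rfl⟩)
    · apply le_sInf
      rintro t (rfl | ⟨a, ha, rfl⟩)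
      · have h1 : s o ≤ s 0 := (key o).2.2 0 (zero_le (a := o))
        rw [hs0] at h1
        exact le_trans (key o).2.1 h1
      · exact hmono _ (hdom (key o).1) _ (hdom (key a).1)
          ((key o).2.2 a (Order.lt_succ_iff.mp ha))
  have hstab : ∃ o : Ordinal.{u}, F.toFun (s o) = s o := by
    by_contra hcon
    push_neg at hcon
    have hsm : ∀ a b : Ordinal.{u}, a < b → s b < s a := by
      intro a b hab
      have h1 : s (Order.succ a) ≤ s a := by
        rw [hsucc]; exact (key a).2.1
      have h2 : s (Order.succ a) ≠ s a := by
        intro h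
        exact hcon a (by rw [← hsucc, h])
      exact lt_of_le_of_lt ((key b).2.2 _ (Order.succ_le_of_lt hab))
        (lt_of_le_of_ne h1 h2)
    have hinj : Function.Injective s := by
      intro a b hab
      rcases lt_trichotomy a b with h | h | h
      · exact absurd hab.symm (hsm a b h).ne
      · exact h
      · exact absurd hab (hsm b a h).ne
    exact not_small_ordinal.{u} (small_of_injective hinj)
  obtain ⟨o, ho⟩ := hstab
  refine ⟨s o, (key o).1, ⟨⟨hdom (key o).1, ho⟩, ?_⟩, ?_⟩
  · rw [← hs0]; exact (key o).2.2 0 (zero_le (a := o))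
  · rintro z ⟨⟨hzdom, hzfix⟩, hσz⟩
    have : ∀ a : Ordinal.{u}, z ≤ s a := by
      intro a
      induction a using Ordinal.induction with
      | h a IH =>
      rw [show s a = _ from ordIterD_eq F.toFun σ a]
      apply le_sInf
      rintro t (rfl | ⟨b, hb, rfl⟩)
      · exact hσz
      · rw [← hzfix]
        exact hmono _ hzdom _ (hdom (key b).1) (IH b hb)
    exact this o

end TransfiniteDown
section DeltaLemmas

variable {V : Type*} [CompleteLattice V] {d : ℕ} {δ : (Fin d → V) → V}

theorem Delta_mono (hmono : Monotone δ) : Monotone (Delta δ) :=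
  fun x y h i => hmono (fun j => h (min i j))

theorem Delta_congr_prefix {x y : Fin d → V} {i : Fin d}
    (h : ∀ j, j ≤ i → x j = y j) : Delta δ x i = Delta δ y i :=
  congrArg δ (funext fun j => h _ (min_le_left i j))

theorem Delta_tail_eq {n : ℕ} {x : Fin d → V} (hfix : IsNFixed n x) {i i' : Fin d}
    (hi : n ≤ i.1 + 1) (hi' : n ≤ i'.1 + 1) : Delta δ x i = Delta δ x i' := by
  have hmin : ∀ a b : Fin d, n ≤ a.1 + 1 → n ≤ b.1 + 1 → n ≤ (min a b).1 + 1 := by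
    intro a b ha hb
    rcases le_total a b with h | h
    · rw [min_eq_left h]; exact ha
    · rw [min_eq_right h]; exact hb
  refine congrArg δ (funext fun j => ?_)
  by_cases hj : j.1 + 2 ≤ n
  · have hji : j ≤ i := Fin.le_def.mpr (by omega)
    have hji' : j ≤ i' := Fin.le_def.mpr (by omega)
    rw [min_eq_right hji, min_eq_right hji']
  · have hjn : n ≤ j.1 + 1 := by omega
    exact hfix _ _ (hmin i j hi hjn) (hmin i' j hi' hjn)

theorem Delta_apply_sSup (hcont : ChainContinuous δ) {C : Set (Fin d → V)}
    (hne : C.Nonempty) (hch : IsChain (· ≤ ·) C) (i : Fin d) :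
    Delta δ (sSup C) i = ⨆ c : C, Delta δ (c : Fin d → V) i := by
  haveI : Nonempty C := hne.to_subtype
  set D := Set.range (fun c : C => fun j => (c : Fin d → V) (min i j)) with hD
  have hDne : D.Nonempty := Set.range_nonempty _
  have hDch : IsChain (· ≤ ·) D := by
    rintro _ ⟨c, rfl⟩ _ ⟨c', rfl⟩ _
    rcases hch.total c.2 c'.2 with h | h
    · exact Or.inl (fun j => h _)
    · exact Or.inr (fun j => h _)
  have h1 : (fun j => sSup C (min i j)) = sSup D := by
    funext j
    rw [sSup_apply, hD, sSup_range, iSup_apply]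
  have h2 : Delta δ (sSup C) i = δ (sSup D) := by
    rw [← h1]; rfl
  rw [h2, (hcont D hDne hDch).1, hD, ← Set.range_comp, sSup_range]
  rfl

theorem Delta_apply_sInf (hcont : ChainContinuous δ) {C : Set (Fin d → V)}
    (hne : C.Nonempty) (hch : IsChain (· ≤ ·) C) (i : Fin d) :
    Delta δ (sInf C) i = ⨅ c : C, Delta δ (c : Fin d → V) i := by
  haveI : Nonempty C := hne.to_subtype
  set D := Set.range (fun c : C => fun j => (c : Fin d → V) (min i j)) with hD
  have hDne : D.Nonempty := Set.range_nonempty _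
  have hDch : IsChain (· ≤ ·) D := by
    rintro _ ⟨c, rfl⟩ _ ⟨c', rfl⟩ _
    rcases hch.total c.2 c'.2 with h | h
    · exact Or.inl (fun j => h _)
    · exact Or.inr (fun j => h _)
  have h1 : (fun j => sInf C (min i j)) = sInf D := by
    funext j
    rw [sInf_apply, hD, sInf_range, iInf_apply]
  have h2 : Delta δ (sInf C) i = δ (sInf D) := by
    rw [← h1]; rfl
  rw [h2, (hcont D hDne hDch).2, hD, ← Set.range_comp, sInf_range]
  rfl

theorem Delta_sSup (hcont : ChainContinuous δ) (C : Set (Fin d → V))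
    (hne : C.Nonempty) (hch : IsChain (· ≤ ·) C) :
    Delta δ (sSup C) = sSup (Delta δ '' C) := by
  funext i
  rw [Delta_apply_sSup hcont hne hch i, Set.image_eq_range, sSup_range, iSup_apply]

theorem Delta_sInf (hcont : ChainContinuous δ) (C : Set (Fin d → V))
    (hne : C.Nonempty) (hch : IsChain (· ≤ ·) C) :
    Delta δ (sInf C) = sInf (Delta δ '' C) := by
  funext i
  rw [Delta_apply_sInf hcont hne hch i, Set.image_eq_range, sInf_range, iInf_apply]

end DeltaLemmas
section MkT

variable {V : Type*} [CompleteLattice V] {d : ℕ}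

/-- The `n`-fixed tuple with prefix `τ` and tail value `w`. -/
def mkT (n : ℕ) (τ : Fin d → V) (w : V) : Fin d → V :=
  fun i => if i.val + 2 ≤ n then τ i else w

theorem mkT_prefix {n : ℕ} {τ : Fin d → V} {w : V} {i : Fin d} (h : i.1 + 2 ≤ n) :
    mkT n τ w i = τ i := if_pos h

theorem mkT_tail {n : ℕ} {τ : Fin d → V} {w : V} {i : Fin d} (h : ¬ i.1 + 2 ≤ n) :
    mkT n τ w i = w := if_neg h

theorem mkT_mono {n : ℕ} {τ : Fin d → V} : Monotone (mkT n τ) := by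
  intro w w' h i
  dsimp [mkT]
  split
  · exact le_rfl
  · exact h

theorem mkT_nfixed {n : ℕ} {τ : Fin d → V} {w : V} : IsNFixed n (mkT n τ w) := by
  intro i j hi hj
  rw [mkT_tail (by omega), mkT_tail (by omega)]

theorem eq_mkT {n : ℕ} {τ : Fin d → V} {z : Fin d → V}
    (hpre : ∀ i : Fin d, i.1 + 2 ≤ n → z i = τ i) (hfix : IsNFixed n z)
    (hn : 1 ≤ n) (h : n - 1 < d) : z = mkT n τ (z ⟨n - 1, h⟩) := by
  funext i
  by_cases hi : i.1 + 2 ≤ n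
  · rw [mkT_prefix hi, hpre i hi]
  · rw [mkT_tail hi]
    exact hfix i ⟨n - 1, h⟩ (by omega) (by simp; omega)

theorem Bid_mono {n : ℕ} : Monotone (Bid (V := V) (d := d) n) := by
  intro x y h i
  dsimp [Bid]
  split_ifs
  any_goals exact le_rfl
  · exact h i
  · exact h _

theorem Cut_mono {n : ℕ} : Monotone (Cut (V := V) (d := d) n) := by
  intro x y h i
  dsimp [Cut]
  split_ifs
  any_goals exact le_rfl
  · exact h i
  · exact h _

theorem phiAux_monotonePF (δ : (Fin d → V) → V) (k : ℕ) : MonotonePF (PhiAux δ k) := by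
  cases k with
  | zero => exact monotonePF_comp (monotonePF_total Bid_mono) (monotonePF_limDown _)
  | succ k =>
      rw [PhiAux]
      split_ifs
      · exact monotonePF_comp (monotonePF_total Bid_mono) (monotonePF_limUp _)
      · exact monotonePF_comp (monotonePF_total Bid_mono) (monotonePF_limDown _)

end MkT
section Helpers

variable {V : Type*} [CompleteLattice V] {d : ℕ} {δ : (Fin d → V) → V}

theorem mkT_ordered {n : ℕ} {τ : Fin d → V} {w : V} (hτ : IsOrdered τ)
    (hoddb : ∀ j : Fin d, j.1 + 2 ≤ n → Odd (j.1 + 1) → τ j ≤ w)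
    (hevenb : ∀ j : Fin d, j.1 + 2 ≤ n → Even (j.1 + 1) → w ≤ τ j) :
    IsOrdered (mkT n τ w) := by
  intro i j hij
  by_cases hi : i.1 + 2 ≤ n <;> by_cases hj : j.1 + 2 ≤ n
  · rw [mkT_prefix hi, mkT_prefix hj]; exact hτ i j hij
  · rw [mkT_prefix hi, mkT_tail hj]
    rcases hij with ⟨h1, h2⟩ | ⟨h1, h2, h3⟩ | ⟨h1, h2, h3⟩
    · exact hoddb i hi h1
    · exact hoddb i hi h1
    · exact absurd h3 (by omega)
  · rw [mkT_tail hi, mkT_prefix hj]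
    rcases hij with ⟨h1, h2⟩ | ⟨h1, h2, h3⟩ | ⟨h1, h2, h3⟩
    · exact hevenb j hj h2
    · exact absurd h3 (by omega)
    · exact hevenb j hj h2
  · rw [mkT_tail hi, mkT_tail hj]

theorem Delta_prefix_tau {n : ℕ} {τ z : Fin d → V}
    (hpre : ∀ i : Fin d, i.1 + 2 ≤ n → z i = τ i) {i : Fin d} (hi : i.1 + 2 ≤ n) :
    Delta δ z i = Delta δ τ i :=
  Delta_congr_prefix (fun j hj => hpre j (by have := Fin.le_def.mp hj; omega))

theorem Delta_mkT_tail_eq {n : ℕ} {τ : Fin d → V} {w : V} {i : Fin d}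
    (hi : n ≤ i.1 + 1) : Delta δ (mkT n τ w) i = δ (mkT n τ w) := by
  refine congrArg δ (funext fun j => ?_)
  by_cases hj : j.1 + 2 ≤ n
  · rw [min_eq_right (Fin.le_def.mpr (show j.1 ≤ i.1 by omega))]
  · rw [mkT_tail hj]
    apply mkT_tail
    rcases le_total i j with h | h
    · rw [min_eq_left h]; omega
    · rw [min_eq_right h]; omega

theorem delta_mkT_pivot {n : ℕ} {τ : Fin d → V} (hsat : IsNSaturated δ n τ)
    (hn2 : 2 ≤ n) (hnd : n ≤ d) :
    δ (mkT n τ (τ ⟨n - 2, by omega⟩)) = τ ⟨n - 2, by omega⟩ := by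
  have harg : mkT n τ (τ ⟨n - 2, by omega⟩)
      = fun j => τ (min ⟨n - 2, by omega⟩ j) := by
    funext j
    by_cases hj : j.1 + 2 ≤ n
    · rw [mkT_prefix hj, min_eq_right (Fin.le_def.mpr (show j.1 ≤ n - 2 by omega))]
    · rw [mkT_tail hj, min_eq_left (Fin.le_def.mpr (show n - 2 ≤ j.1 by omega))]
  rw [harg]
  exact hsat ⟨n - 2, by omega⟩ (by show n - 2 + 2 ≤ n; omega)

theorem delta_mkT_lo (hmono : Monotone δ) {n : ℕ} {τ : Fin d → V}
    (hsat : IsNSaturated δ n τ) (hn3 : 3 ≤ n) (hnd : n ≤ d)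
    (hstep : τ ⟨n - 3, by omega⟩ ≤ τ ⟨n - 2, by omega⟩) :
    τ ⟨n - 3, by omega⟩ ≤ δ (mkT n τ (τ ⟨n - 3, by omega⟩)) := by
  have h1 : Delta δ τ ⟨n - 3, by omega⟩ = τ ⟨n - 3, by omega⟩ :=
    hsat _ (by show n - 3 + 2 ≤ n; omega)
  calc τ ⟨n - 3, by omega⟩ = Delta δ τ ⟨n - 3, by omega⟩ := h1.symm
    _ ≤ δ (mkT n τ (τ ⟨n - 3, by omega⟩)) := by
        apply hmono
        intro j
        show τ (min ⟨n - 3, by omega⟩ j) ≤ mkT n τ (τ ⟨n - 3, by omega⟩) j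
        by_cases hj : j.1 + 2 ≤ n
        · rw [mkT_prefix hj]
          by_cases hj3 : j.1 ≤ n - 3
          · rw [min_eq_right (Fin.le_def.mpr (show j.1 ≤ n - 3 from hj3))]
          · have hje : j = ⟨n - 2, by omega⟩ := Fin.ext (show _ = n - 2 by omega)
            rw [min_eq_left (Fin.le_def.mpr (show n - 3 ≤ j.1 by omega)), hje]
            exact hstep
        · rw [mkT_tail hj, min_eq_left (Fin.le_def.mpr (show n - 3 ≤ j.1 by omega))]

theorem delta_mkT_lo' (hmono : Monotone δ) {n : ℕ} {τ : Fin d → V}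
    (hsat : IsNSaturated δ n τ) (hn3 : 3 ≤ n) (hnd : n ≤ d)
    (hstep : τ ⟨n - 2, by omega⟩ ≤ τ ⟨n - 3, by omega⟩) :
    δ (mkT n τ (τ ⟨n - 3, by omega⟩)) ≤ τ ⟨n - 3, by omega⟩ := by
  have h1 : Delta δ τ ⟨n - 3, by omega⟩ = τ ⟨n - 3, by omega⟩ :=
    hsat _ (by show n - 3 + 2 ≤ n; omega)
  calc δ (mkT n τ (τ ⟨n - 3, by omega⟩))
      ≤ Delta δ τ ⟨n - 3, by omega⟩ := by
        apply hmono
        intro j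
        show mkT n τ (τ ⟨n - 3, by omega⟩) j ≤ τ (min ⟨n - 3, by omega⟩ j)
        by_cases hj : j.1 + 2 ≤ n
        · rw [mkT_prefix hj]
          by_cases hj3 : j.1 ≤ n - 3
          · rw [min_eq_right (Fin.le_def.mpr (show j.1 ≤ n - 3 from hj3))]
          · have hje : j = ⟨n - 2, by omega⟩ := Fin.ext (show _ = n - 2 by omega)
            rw [min_eq_left (Fin.le_def.mpr (show n - 3 ≤ j.1 by omega)), hje]
            exact hstep
        · rw [mkT_tail hj, min_eq_left (Fin.le_def.mpr (show n - 3 ≤ j.1 by omega))]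
    _ = τ ⟨n - 3, by omega⟩ := h1

theorem delta_z_le_mkT (hmono : Monotone δ) {n : ℕ} {τ : Fin d → V}
    (hn1 : 1 ≤ n) (hnd : n < d) {z : Fin d → V}
    (hpre : ∀ j : Fin d, j.1 + 2 ≤ n → z j = τ j)
    (hwy : z ⟨n - 1, by omega⟩ ≤ z ⟨n, hnd⟩) :
    Delta δ z ⟨n, hnd⟩ ≤ δ (mkT n τ (z ⟨n, hnd⟩)) := by
  apply hmono
  intro j
  show z (min ⟨n, hnd⟩ j) ≤ mkT n τ (z ⟨n, hnd⟩) j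
  by_cases hj : j.1 + 2 ≤ n
  · rw [min_eq_right (Fin.le_def.mpr (show j.1 ≤ n by omega)), mkT_prefix hj,
      hpre j hj]
  · rw [mkT_tail hj]
    by_cases hj1 : j.1 = n - 1
    · have hje : j = ⟨n - 1, by omega⟩ := Fin.ext (show _ = n - 1 by omega)
      rw [min_eq_right (Fin.le_def.mpr (show j.1 ≤ n by omega)), hje]
      exact hwy
    · rw [min_eq_left (Fin.le_def.mpr (show n ≤ j.1 by omega))]

theorem delta_mkT_le_z (hmono : Monotone δ) {n : ℕ} {τ : Fin d → V}
    (hn1 : 1 ≤ n) (hnd : n < d) {z : Fin d → V}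
    (hpre : ∀ j : Fin d, j.1 + 2 ≤ n → z j = τ j)
    (hwy : z ⟨n, hnd⟩ ≤ z ⟨n - 1, by omega⟩) :
    δ (mkT n τ (z ⟨n, hnd⟩)) ≤ Delta δ z ⟨n, hnd⟩ := by
  apply hmono
  intro j
  show mkT n τ (z ⟨n, hnd⟩) j ≤ z (min ⟨n, hnd⟩ j)
  by_cases hj : j.1 + 2 ≤ n
  · rw [min_eq_right (Fin.le_def.mpr (show j.1 ≤ n by omega)), mkT_prefix hj,
      hpre j hj]
  · rw [mkT_tail hj]
    by_cases hj1 : j.1 = n - 1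
    · have hje : j = ⟨n - 1, by omega⟩ := Fin.ext (show _ = n - 1 by omega)
      rw [min_eq_right (Fin.le_def.mpr (show j.1 ≤ n by omega)), hje]
      exact hwy
    · rw [min_eq_left (Fin.le_def.mpr (show n ≤ j.1 by omega))]

theorem Bid_eq_mkT1 {τ : Fin d → V} : Bid 1 τ = mkT 1 τ ⊥ := by
  funext i
  have h : ¬ i.1 + 2 ≤ 1 := by omega
  rw [Bid, mkT]
  simp [h]

theorem Bid_eq_mkT2 {τ : Fin d → V} : Bid 2 τ = mkT 2 τ ⊤ := by
  funext i
  rw [Bid, mkT]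
  by_cases hi : i.1 + 2 ≤ 2
  · rw [if_pos hi, if_pos hi]
  · rw [if_neg hi, if_neg hi, if_neg (by omega : ¬ (2:ℕ) = 1), if_pos rfl]

theorem Bid_eq_mkT3 {n : ℕ} {τ : Fin d → V} (hn3 : 3 ≤ n) (h : n - 3 < d) :
    Bid n τ = mkT n τ (τ ⟨n - 3, h⟩) := by
  funext i
  rw [Bid, mkT]
  by_cases hi : i.1 + 2 ≤ n
  · rw [if_pos hi, if_pos hi]
  · rw [if_neg hi, if_neg hi, if_neg (by omega : ¬ n = 1), if_neg (by omega : ¬ n = 2),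
      dif_pos h]

theorem Cut_eq_mkT {n : ℕ} {τ : Fin d → V} (hnd : n < d) {z : Fin d → V}
    (hpre : ∀ j : Fin d, j.1 + 2 ≤ n → z j = τ j) :
    Cut n z = mkT n τ (z ⟨n, hnd⟩) := by
  funext i
  rw [Cut, mkT]
  by_cases hi : i.1 + 2 ≤ n
  · rw [if_pos hi, if_pos hi, hpre i hi]
  · rw [if_neg hi, if_neg hi, dif_pos hnd]

theorem mkT_fixed_mem_SN {n m : ℕ} {τ : Fin d → V} {w : V} (hτ : IsOrdered τ)
    (hoddb : ∀ j : Fin d, j.1 + 2 ≤ n → Odd (j.1 + 1) → τ j ≤ w)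
    (hevenb : ∀ j : Fin d, j.1 + 2 ≤ n → Even (j.1 + 1) → w ≤ τ j)
    (hfixpt : Delta δ (mkT n τ w) = mkT n τ w) (hmn : n ≤ m) :
    mkT n τ w ∈ SN δ m := by
  refine ⟨mkT_ordered hτ hoddb hevenb, ?_, ?_, ?_, ?_⟩
  · intro i j hi hj
    exact mkT_nfixed i j (by omega) (by omega)
  · intro i _
    exact congrFun hfixpt i
  · intro _
    exact le_of_eq hfixpt.symm
  · intro _
    exact le_of_eq hfixpt

end Helpers
section OddStep

variable {V : Type u} [CompleteLattice V] {d : ℕ} {δ : (Fin d → V) → V}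

theorem oddStep (hmono : Monotone δ) (hcont : ChainContinuous δ)
    {n : ℕ} (hn1 : 1 ≤ n) (hnd : n < d) (ho : Odd n)
    (G : PFunc (Fin d → V)) (hGmono : MonotonePF G)
    (hG : ∀ y ∈ SN δ (n + 1), y ∈ G.dom ∧ G.toFun y ∈ SN δ (n + 2) ∧
      ∀ i : Fin d, i.1 + 2 ≤ n + 1 → G.toFun y i = y i)
    (τ : Fin d → V) (hτ : τ ∈ SN δ n) :
    τ ∈ ((PFunc.total (Bid n)).comp
        (limUp (((limUp (PFunc.total (Delta δ))).comp G).comp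
          (PFunc.total (Cut n))))).dom ∧
    ((PFunc.total (Bid n)).comp
        (limUp (((limUp (PFunc.total (Delta δ))).comp G).comp
          (PFunc.total (Cut n))))).toFun τ ∈ SN δ (n + 1) ∧
    ∀ i : Fin d, i.1 + 2 ≤ n →
      ((PFunc.total (Bid n)).comp
        (limUp (((limUp (PFunc.total (Delta δ))).comp G).comp
          (PFunc.total (Cut n))))).toFun τ i = τ i := by
  have hno : n % 2 = 1 := Nat.odd_iff.mp ho
  obtain ⟨hord, hfixτ, hsat, hOddC, -⟩ := hτ
  have hn1d : n - 1 < d := by omega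
  set F : PFunc (Fin d → V) :=
    ((limUp (PFunc.total (Delta δ))).comp G).comp (PFunc.total (Cut n)) with hF
  -- the lo/hi package
  obtain ⟨lo, hi, hBid, hlohi, hloOdd, hhiEven, hloδ, hhiCl, hhiz⟩ :
      ∃ lo hi_, Bid n τ = mkT n τ lo ∧ lo ≤ hi_ ∧
        (∀ j : Fin d, j.1 + 2 ≤ n → Odd (j.1 + 1) → τ j ≤ lo) ∧
        (∀ j : Fin d, j.1 + 2 ≤ n → Even (j.1 + 1) → hi_ ≤ τ j) ∧
        lo ≤ δ (mkT n τ lo) ∧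
        (∀ z : Fin d → V, z ≤ mkT n τ hi_ → Delta δ z ≤ mkT n τ hi_) ∧
        (∀ z : Fin d → V, IsOrdered z → (∀ j : Fin d, j.1 + 2 ≤ n → z j = τ j) →
          z ⟨n, hnd⟩ ≤ hi_) := by
    by_cases h1 : n = 1
    · subst h1
      refine ⟨⊥, ⊤, Bid_eq_mkT1, le_top, ?_, ?_, bot_le, ?_, ?_⟩
      · intro j hj _; exact absurd hj (by omega)
      · intro j hj _; exact absurd hj (by omega)
      · intro z _ i
        rw [mkT_tail (by omega)]
        exact le_top
      · intro z _ _; exact le_top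
    · have h3 : 3 ≤ n := by omega
      have hstep : τ ⟨n - 3, by omega⟩ ≤ τ ⟨n - 2, by omega⟩ := by
        refine hord _ _ ?_
        show ParityLE (n - 3 + 1) (n - 2 + 1)
        exact Or.inl ⟨Nat.odd_iff.mpr (by omega), Nat.even_iff.mpr (by omega)⟩
      have hfixhi : Delta δ (mkT n τ (τ ⟨n - 2, by omega⟩))
          = mkT n τ (τ ⟨n - 2, by omega⟩) := by
        funext i
        by_cases hi : i.1 + 2 ≤ n
        · rw [Delta_prefix_tau (fun i hi => mkT_prefix hi) hi, hsat i hi, mkT_prefix hi]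
        · rw [Delta_mkT_tail_eq (by omega), mkT_tail hi]
          exact delta_mkT_pivot hsat (by omega) (by omega)
      refine ⟨τ ⟨n - 3, by omega⟩, τ ⟨n - 2, by omega⟩, Bid_eq_mkT3 h3 (by omega),
        hstep, ?_, ?_, delta_mkT_lo hmono hsat h3 (by omega) hstep, ?_, ?_⟩
      · intro j hj hjo
        refine hord _ _ ?_
        show ParityLE (j.1 + 1) (n - 3 + 1)
        have := Nat.odd_iff.mp hjo
        exact Or.inr (Or.inl ⟨hjo, Nat.odd_iff.mpr (by omega), by omega⟩)
      · intro j hj hje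
        refine hord _ _ ?_
        show ParityLE (n - 2 + 1) (j.1 + 1)
        have := Nat.even_iff.mp hje
        exact Or.inr (Or.inr ⟨Nat.even_iff.mpr (by omega), hje, by omega⟩)
      · intro z hz
        calc Delta δ z ≤ Delta δ (mkT n τ (τ ⟨n - 2, by omega⟩)) :=
              Delta_mono hmono hz
          _ = mkT n τ (τ ⟨n - 2, by omega⟩) := hfixhi
      · intro z hzord hzpre
        have h4 := hzord ⟨n, hnd⟩ ⟨n - 2, by omega⟩ (by
          show ParityLE (n + 1) (n - 2 + 1)
          exact Or.inr (Or.inr ⟨Nat.even_iff.mpr (by omega),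
            Nat.even_iff.mpr (by omega), by omega⟩))
        rwa [hzpre ⟨n - 2, by omega⟩ (by show n - 2 + 2 ≤ n; omega)] at h4
  -- the invariant set A
  set A : Set (Fin d → V) := {x | (∀ i : Fin d, i.1 + 2 ≤ n → x i = τ i) ∧
    IsNFixed n x ∧ lo ≤ x ⟨n - 1, hn1d⟩ ∧ x ⟨n - 1, hn1d⟩ ≤ hi ∧
    x ≤ Delta δ x} with hA
  -- main step analysis
  have step : ∀ x ∈ A, x ∈ F.dom ∧ F.toFun x ∈ A ∧ x ≤ F.toFun x ∧
      (F.toFun x = x → Delta δ x = x) := by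
    intro x hx
    obtain ⟨hxpre, hxfix, hxlo, hxhi, hxΔ⟩ := hx
    have hxeq : x = mkT n τ (x ⟨n - 1, hn1d⟩) := eq_mkT hxpre hxfix hn1 hn1d
    obtain ⟨y, hyB, hyL⟩ := kleene_up (Delta_mono hmono)
      (fun C hne hch => Delta_sSup hcont C hne hch) hxΔ
      (B := {z | (∀ i : Fin d, i.1 + 2 ≤ n → z i = τ i) ∧ IsNFixed n z ∧
        z ≤ mkT n τ hi})
      ⟨hxpre, hxfix, le_trans (le_of_eq hxeq) (mkT_mono hxhi)⟩
      (fun z hz => ⟨fun i hi => by rw [Delta_prefix_tau hz.1 hi]; exact hsat i hi,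
        fun i j hi hj => Delta_tail_eq hz.2.1 hi hj, hhiCl z hz.2.2⟩)
      (by
        intro C hCB hne hch
        haveI : Nonempty C := hne.to_subtype
        refine ⟨?_, ?_, ?_⟩
        · intro i hi
          rw [sSup_apply]
          exact (iSup_congr fun c => (hCB c.2).1 i hi).trans iSup_const
        · intro i j hi hj
          rw [sSup_apply, sSup_apply]
          exact iSup_congr fun c => (hCB c.2).2.1 i j hi hj
        · exact sSup_le fun c hc => (hCB hc).2.2)
    have hyfixΔ : Delta δ y = y := hyL.1.1.2
    have hxy : x ≤ y := hyL.1.2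
    have hyeq : y = mkT n τ (y ⟨n - 1, hn1d⟩) := eq_mkT hyB.1 hyB.2.1 hn1 hn1d
    have hyhi : y ⟨n - 1, hn1d⟩ ≤ hi := by
      have h5 := hyB.2.2 ⟨n - 1, hn1d⟩
      rwa [mkT_tail (by show ¬ n - 1 + 2 ≤ n; omega)] at h5
    have hylo : lo ≤ y ⟨n - 1, hn1d⟩ := le_trans hxlo (hxy _)
    have hySN : y ∈ SN δ (n + 1) := by
      rw [hyeq]
      exact mkT_fixed_mem_SN hord
        (fun j hj hjo => le_trans (hloOdd j hj hjo) hylo)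
        (fun j hj hje => le_trans hyhi (hhiEven j hj hje))
        (by rw [← hyeq]; exact hyfixΔ) (by omega)
    have hyval : (limUp (PFunc.total (Delta δ))).toFun x = y := limUp_toFun_eq hyL
    have hydom : x ∈ (limUp (PFunc.total (Delta δ))).dom := ⟨y, hyL⟩
    obtain ⟨hydomG, hzSN, hzstab⟩ := hG y hySN
    obtain ⟨hzord, hzfix, hzsat, -, -⟩ := hzSN
    have hzpre : ∀ j : Fin d, j.1 + 2 ≤ n → G.toFun y j = τ j :=
      fun j hj => (hzstab j (by omega)).trans (hyB.1 j hj)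
    have hzn1 : G.toFun y ⟨n - 1, hn1d⟩ = y ⟨n - 1, hn1d⟩ := hzstab _ (by show n - 1 + 2 ≤ n + 1; omega)
    have hw'ge : y ⟨n - 1, hn1d⟩ ≤ G.toFun y ⟨n, hnd⟩ := by
      rw [← hzn1]
      exact hzord ⟨n - 1, hn1d⟩ ⟨n, hnd⟩ (by
        show ParityLE (n - 1 + 1) (n + 1)
        exact Or.inl ⟨Nat.odd_iff.mpr (by omega), Nat.even_iff.mpr (by omega)⟩)
    have hw'hi : G.toFun y ⟨n, hnd⟩ ≤ hi := hhiz _ hzord hzpre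
    have hw'δ : G.toFun y ⟨n, hnd⟩ ≤ δ (mkT n τ (G.toFun y ⟨n, hnd⟩)) := by
      have h6 : Delta δ (G.toFun y) ⟨n, hnd⟩ = G.toFun y ⟨n, hnd⟩ :=
        hzsat ⟨n, hnd⟩ (by show n + 2 ≤ n + 2; omega)
      calc G.toFun y ⟨n, hnd⟩ = Delta δ (G.toFun y) ⟨n, hnd⟩ := h6.symm
        _ ≤ δ (mkT n τ (G.toFun y ⟨n, hnd⟩)) :=
            delta_z_le_mkT hmono hn1 hnd hzpre (by rw [hzn1]; exact hw'ge)
    have hFx : F.toFun x = mkT n τ (G.toFun y ⟨n, hnd⟩) := by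
      show Cut n (G.toFun ((limUp (PFunc.total (Delta δ))).toFun x)) = _
      rw [hyval]
      exact Cut_eq_mkT hnd hzpre
    have hmkΔ : mkT n τ (G.toFun y ⟨n, hnd⟩) ≤
        Delta δ (mkT n τ (G.toFun y ⟨n, hnd⟩)) := by
      intro i
      by_cases hi : i.1 + 2 ≤ n
      · rw [mkT_prefix hi, Delta_prefix_tau (fun i hi => mkT_prefix hi) hi, hsat i hi]
      · rw [mkT_tail hi, Delta_mkT_tail_eq (by omega)]
        exact hw'δ
    refine ⟨⟨⟨hydom, by rw [hyval]; exact hydomG⟩, Set.mem_univ _⟩, ?_, ?_, ?_⟩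
    · rw [hFx]
      exact ⟨fun i hi => mkT_prefix hi, mkT_nfixed,
        by rw [mkT_tail (by show ¬ n - 1 + 2 ≤ n; omega)]
           exact le_trans hxlo (le_trans (hxy _) hw'ge),
        by rw [mkT_tail (by show ¬ n - 1 + 2 ≤ n; omega)]; exact hw'hi, hmkΔ⟩
    · rw [hFx]
      exact le_trans (le_of_eq hxeq) (mkT_mono (le_trans (hxy _) hw'ge))
    · intro hFfix
      have h7 : x ⟨n - 1, hn1d⟩ = G.toFun y ⟨n, hnd⟩ := by
        calc x ⟨n - 1, hn1d⟩ = F.toFun x ⟨n - 1, hn1d⟩ := (congrFun hFfix _).symm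
          _ = G.toFun y ⟨n, hnd⟩ := by rw [hFx, mkT_tail (by show ¬ n - 1 + 2 ≤ n; omega)]
      have h8 : y ⟨n - 1, hn1d⟩ = x ⟨n - 1, hn1d⟩ :=
        le_antisymm (by rw [h7]; exact hw'ge) (hxy _)
      have h9 : y = x := by rw [hyeq, h8, ← hxeq]
      rw [← h9]
      exact hyfixΔ
  -- F is ascending on A
  have hAsc : AscendingOn F A := by
    refine ⟨monotonePF_comp (monotonePF_comp (monotonePF_limUp _) hGmono)
      (monotonePF_total Cut_mono), fun x hx => (step x hx).1, ?_,
      fun x hx => ⟨(step x hx).2.1, (step x hx).2.2.1⟩⟩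
    intro C hCA hne hch
    haveI : Nonempty C := hne.to_subtype
    obtain ⟨c0, hc0⟩ := id hne
    constructor
    · refine ⟨sSup C, ⟨?_, ?_, ?_, ?_, ?_⟩, isLUB_sSup C⟩
      · intro i hi
        rw [sSup_apply]
        exact (iSup_congr fun c => (hCA c.2).1 i hi).trans iSup_const
      · intro i j hi hj
        rw [sSup_apply, sSup_apply]
        exact iSup_congr fun c => (hCA c.2).2.1 i j hi hj
      · refine le_trans (hCA hc0).2.2.1 ?_
        rw [sSup_apply]
        exact le_iSup (fun c : C => (c : Fin d → V) ⟨n - 1, hn1d⟩) ⟨c0, hc0⟩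
      · rw [sSup_apply]
        exact iSup_le fun c => (hCA c.2).2.2.2.1
      · intro i
        rw [Delta_apply_sSup hcont hne hch i, sSup_apply]
        exact iSup_mono fun c => (hCA c.2).2.2.2.2 i
    · refine ⟨sInf C, ⟨?_, ?_, ?_, ?_, ?_⟩, isGLB_sInf C⟩
      · intro i hi
        rw [sInf_apply]
        exact (iInf_congr fun c => (hCA c.2).1 i hi).trans iInf_const
      · intro i j hi hj
        rw [sInf_apply, sInf_apply]
        exact iInf_congr fun c => (hCA c.2).2.1 i j hi hj
      · rw [sInf_apply]
        exact le_iInf fun c => (hCA c.2).2.2.1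
      · refine le_trans ?_ (hCA hc0).2.2.2.1
        rw [sInf_apply]
        exact iInf_le (fun c : C => (c : Fin d → V) ⟨n - 1, hn1d⟩) ⟨c0, hc0⟩
      · intro i
        rw [Delta_apply_sInf hcont hne hch i, sInf_apply]
        exact iInf_mono fun c => (hCA c.2).2.2.2.2 i
  -- the starting point
  have hσA : Bid n τ ∈ A := by
    rw [hBid]
    refine ⟨fun i hi => mkT_prefix hi, mkT_nfixed, ?_, ?_, ?_⟩
    · rw [mkT_tail (by show ¬ n - 1 + 2 ≤ n; omega)]
    · rw [mkT_tail (by show ¬ n - 1 + 2 ≤ n; omega)]; exact hlohi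
    · intro i
      by_cases hi : i.1 + 2 ≤ n
      · rw [mkT_prefix hi, Delta_prefix_tau (fun i hi => mkT_prefix hi) hi, hsat i hi]
      · rw [mkT_tail hi, Delta_mkT_tail_eq (by omega)]
        exact hloδ
  obtain ⟨ρ, hρA, hρL⟩ := exists_lfp_above hAsc hσA
  have hρval : ((PFunc.total (Bid n)).comp (limUp F)).toFun τ = ρ := by
    show (limUp F).toFun (Bid n τ) = ρ
    exact limUp_toFun_eq hρL
  have hρfixF : F.toFun ρ = ρ := hρL.1.1.2
  have hρΔ : Delta δ ρ = ρ := (step ρ hρA).2.2.2 hρfixF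
  have hρeq : ρ = mkT n τ (ρ ⟨n - 1, hn1d⟩) := eq_mkT hρA.1 hρA.2.1 hn1 hn1d
  refine ⟨⟨Set.mem_univ _, ⟨ρ, hρL⟩⟩, ?_, ?_⟩
  · rw [hρval, hρeq]
    exact mkT_fixed_mem_SN hord
      (fun j hj hjo => le_trans (hloOdd j hj hjo) hρA.2.2.1)
      (fun j hj hje => le_trans hρA.2.2.2.1 (hhiEven j hj hje))
      (by rw [← hρeq]; exact hρΔ) (by omega)
  · intro i hi
    rw [hρval]
    exact hρA.1 i hi

end OddStep
section EvenStep

variable {V : Type u} [CompleteLattice V] {d : ℕ} {δ : (Fin d → V) → V}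

theorem evenStep (hmono : Monotone δ) (hcont : ChainContinuous δ)
    {n : ℕ} (hn1 : 1 ≤ n) (hnd : n < d) (he : Even n)
    (G : PFunc (Fin d → V)) (hGmono : MonotonePF G)
    (hG : ∀ y ∈ SN δ (n + 1), y ∈ G.dom ∧ G.toFun y ∈ SN δ (n + 2) ∧
      ∀ i : Fin d, i.1 + 2 ≤ n + 1 → G.toFun y i = y i)
    (τ : Fin d → V) (hτ : τ ∈ SN δ n) :
    τ ∈ ((PFunc.total (Bid n)).comp
        (limDown (((limDown (PFunc.total (Delta δ))).comp G).comp
          (PFunc.total (Cut n))))).dom ∧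
    ((PFunc.total (Bid n)).comp
        (limDown (((limDown (PFunc.total (Delta δ))).comp G).comp
          (PFunc.total (Cut n))))).toFun τ ∈ SN δ (n + 1) ∧
    ∀ i : Fin d, i.1 + 2 ≤ n →
      ((PFunc.total (Bid n)).comp
        (limDown (((limDown (PFunc.total (Delta δ))).comp G).comp
          (PFunc.total (Cut n))))).toFun τ i = τ i := by
  have hno : n % 2 = 0 := Nat.even_iff.mp he
  have h2 : 2 ≤ n := by omega
  obtain ⟨hord, hfixτ, hsat, -, hEvenC⟩ := hτ
  have hn1d : n - 1 < d := by omega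
  have hn2d : n - 2 < d := by omega
  set F : PFunc (Fin d → V) :=
    ((limDown (PFunc.total (Delta δ))).comp G).comp (PFunc.total (Cut n)) with hF
  set lb : V := τ ⟨n - 2, hn2d⟩ with hlb
  have hlbOdd : ∀ j : Fin d, j.1 + 2 ≤ n → Odd (j.1 + 1) → τ j ≤ lb := by
    intro j hj hjo
    refine hord _ _ ?_
    show ParityLE (j.1 + 1) (n - 2 + 1)
    exact Or.inr (Or.inl ⟨hjo, Nat.odd_iff.mpr (by omega), by omega⟩)
  have hlbfix : Delta δ (mkT n τ lb) = mkT n τ lb := by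
    funext i
    by_cases hi : i.1 + 2 ≤ n
    · rw [Delta_prefix_tau (fun i hi => mkT_prefix hi) hi, hsat i hi, mkT_prefix hi]
    · rw [Delta_mkT_tail_eq (by omega), mkT_tail hi]
      exact delta_mkT_pivot hsat h2 (by omega)
  have hlbCl : ∀ z : Fin d → V, mkT n τ lb ≤ z → mkT n τ lb ≤ Delta δ z := by
    intro z hz
    calc mkT n τ lb = Delta δ (mkT n τ lb) := hlbfix.symm
      _ ≤ Delta δ z := Delta_mono hmono hz
  have hlbz : ∀ z : Fin d → V, IsOrdered z →
      (∀ j : Fin d, j.1 + 2 ≤ n → z j = τ j) → lb ≤ z ⟨n, hnd⟩ := by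
    intro z hzord hzpre
    have h4 := hzord ⟨n - 2, hn2d⟩ ⟨n, hnd⟩ (by
      show ParityLE (n - 2 + 1) (n + 1)
      exact Or.inr (Or.inl ⟨Nat.odd_iff.mpr (by omega),
        Nat.odd_iff.mpr (by omega), by omega⟩))
    rwa [hzpre ⟨n - 2, hn2d⟩ (by show n - 2 + 2 ≤ n; omega)] at h4
  obtain ⟨ub, hBid, hlbub, hubEven, hubδ⟩ :
      ∃ ub, Bid n τ = mkT n τ ub ∧ lb ≤ ub ∧
        (∀ j : Fin d, j.1 + 2 ≤ n → Even (j.1 + 1) → ub ≤ τ j) ∧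
        δ (mkT n τ ub) ≤ ub := by
    by_cases hn2 : n = 2
    · subst hn2
      refine ⟨⊤, Bid_eq_mkT2, le_top, ?_, le_top⟩
      intro j hj hje
      have := Nat.even_iff.mp hje
      exact absurd this (by omega)
    · have h3 : 3 ≤ n := by omega
      have hstep : τ ⟨n - 2, by omega⟩ ≤ τ ⟨n - 3, by omega⟩ := by
        refine hord _ _ ?_
        show ParityLE (n - 2 + 1) (n - 3 + 1)
        exact Or.inl ⟨Nat.odd_iff.mpr (by omega), Nat.even_iff.mpr (by omega)⟩
      refine ⟨τ ⟨n - 3, by omega⟩, Bid_eq_mkT3 h3 (by omega), hstep, ?_,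
        delta_mkT_lo' hmono hsat h3 (by omega) hstep⟩
      intro j hj hje
      refine hord _ _ ?_
      show ParityLE (n - 3 + 1) (j.1 + 1)
      have := Nat.even_iff.mp hje
      exact Or.inr (Or.inr ⟨Nat.even_iff.mpr (by omega), hje, by omega⟩)
  set A : Set (Fin d → V) := {x | (∀ i : Fin d, i.1 + 2 ≤ n → x i = τ i) ∧
    IsNFixed n x ∧ lb ≤ x ⟨n - 1, hn1d⟩ ∧ x ⟨n - 1, hn1d⟩ ≤ ub ∧
    Delta δ x ≤ x} with hA
  have step : ∀ x ∈ A, x ∈ F.dom ∧ F.toFun x ∈ A ∧ F.toFun x ≤ x ∧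
      (F.toFun x = x → Delta δ x = x) := by
    intro x hx
    obtain ⟨hxpre, hxfix, hxlb, hxub, hxΔ⟩ := hx
    have hxeq : x = mkT n τ (x ⟨n - 1, hn1d⟩) := eq_mkT hxpre hxfix hn1 hn1d
    obtain ⟨y, hyB, hyL⟩ := kleene_down (Delta_mono hmono)
      (fun C hne hch => Delta_sInf hcont C hne hch) hxΔ
      (B := {z | (∀ i : Fin d, i.1 + 2 ≤ n → z i = τ i) ∧ IsNFixed n z ∧
        mkT n τ lb ≤ z})
      ⟨hxpre, hxfix, le_trans (mkT_mono hxlb) (le_of_eq hxeq.symm)⟩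
      (fun z hz => ⟨fun i hi => by rw [Delta_prefix_tau hz.1 hi]; exact hsat i hi,
        fun i j hi hj => Delta_tail_eq hz.2.1 hi hj, hlbCl z hz.2.2⟩)
      (by
        intro C hCB hne hch
        haveI : Nonempty C := hne.to_subtype
        refine ⟨?_, ?_, ?_⟩
        · intro i hi
          rw [sInf_apply]
          exact (iInf_congr fun c => (hCB c.2).1 i hi).trans iInf_const
        · intro i j hi hj
          rw [sInf_apply, sInf_apply]
          exact iInf_congr fun c => (hCB c.2).2.1 i j hi hj
        · exact le_sInf fun c hc => (hCB hc).2.2)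
    have hyfixΔ : Delta δ y = y := hyL.1.1.2
    have hxy : y ≤ x := hyL.1.2
    have hyeq : y = mkT n τ (y ⟨n - 1, hn1d⟩) := eq_mkT hyB.1 hyB.2.1 hn1 hn1d
    have hylb : lb ≤ y ⟨n - 1, hn1d⟩ := by
      have h5 := hyB.2.2 ⟨n - 1, hn1d⟩
      rwa [mkT_tail (by show ¬ n - 1 + 2 ≤ n; omega)] at h5
    have hyub : y ⟨n - 1, hn1d⟩ ≤ ub := le_trans (hxy _) hxub
    have hySN : y ∈ SN δ (n + 1) := by
      rw [hyeq]
      exact mkT_fixed_mem_SN hord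
        (fun j hj hjo => le_trans (hlbOdd j hj hjo) hylb)
        (fun j hj hje => le_trans hyub (hubEven j hj hje))
        (by rw [← hyeq]; exact hyfixΔ) (by omega)
    have hyval : (limDown (PFunc.total (Delta δ))).toFun x = y := limDown_toFun_eq hyL
    have hydom : x ∈ (limDown (PFunc.total (Delta δ))).dom := ⟨y, hyL⟩
    obtain ⟨hydomG, hzSN, hzstab⟩ := hG y hySN
    obtain ⟨hzord, hzfix, hzsat, -, -⟩ := hzSN
    have hzpre : ∀ j : Fin d, j.1 + 2 ≤ n → G.toFun y j = τ j :=
      fun j hj => (hzstab j (by omega)).trans (hyB.1 j hj)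
    have hzn1 : G.toFun y ⟨n - 1, hn1d⟩ = y ⟨n - 1, hn1d⟩ :=
      hzstab _ (by show n - 1 + 2 ≤ n + 1; omega)
    have hw'le : G.toFun y ⟨n, hnd⟩ ≤ y ⟨n - 1, hn1d⟩ := by
      rw [← hzn1]
      exact hzord ⟨n, hnd⟩ ⟨n - 1, hn1d⟩ (by
        show ParityLE (n + 1) (n - 1 + 1)
        exact Or.inl ⟨Nat.odd_iff.mpr (by omega), Nat.even_iff.mpr (by omega)⟩)
    have hw'lb : lb ≤ G.toFun y ⟨n, hnd⟩ := hlbz _ hzord hzpre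
    have hw'δ : δ (mkT n τ (G.toFun y ⟨n, hnd⟩)) ≤ G.toFun y ⟨n, hnd⟩ := by
      have h6 : Delta δ (G.toFun y) ⟨n, hnd⟩ = G.toFun y ⟨n, hnd⟩ :=
        hzsat ⟨n, hnd⟩ (by show n + 2 ≤ n + 2; omega)
      calc δ (mkT n τ (G.toFun y ⟨n, hnd⟩)) ≤ Delta δ (G.toFun y) ⟨n, hnd⟩ :=
            delta_mkT_le_z hmono hn1 hnd hzpre (by rw [hzn1]; exact hw'le)
        _ = G.toFun y ⟨n, hnd⟩ := h6
    have hFx : F.toFun x = mkT n τ (G.toFun y ⟨n, hnd⟩) := by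
      show Cut n (G.toFun ((limDown (PFunc.total (Delta δ))).toFun x)) = _
      rw [hyval]
      exact Cut_eq_mkT hnd hzpre
    have hmkΔ : Delta δ (mkT n τ (G.toFun y ⟨n, hnd⟩)) ≤
        mkT n τ (G.toFun y ⟨n, hnd⟩) := by
      intro i
      by_cases hi : i.1 + 2 ≤ n
      · rw [mkT_prefix hi, Delta_prefix_tau (fun i hi => mkT_prefix hi) hi, hsat i hi]
      · rw [mkT_tail hi, Delta_mkT_tail_eq (by omega)]
        exact hw'δ
    refine ⟨⟨⟨hydom, by rw [hyval]; exact hydomG⟩, Set.mem_univ _⟩, ?_, ?_, ?_⟩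
    · rw [hFx]
      exact ⟨fun i hi => mkT_prefix hi, mkT_nfixed,
        by rw [mkT_tail (by show ¬ n - 1 + 2 ≤ n; omega)]; exact hw'lb,
        by rw [mkT_tail (by show ¬ n - 1 + 2 ≤ n; omega)]
           exact le_trans hw'le (le_trans (hxy _) hxub), hmkΔ⟩
    · rw [hFx]
      exact le_trans (mkT_mono (le_trans hw'le (hxy _))) (le_of_eq hxeq.symm)
    · intro hFfix
      have h7 : x ⟨n - 1, hn1d⟩ = G.toFun y ⟨n, hnd⟩ := by
        calc x ⟨n - 1, hn1d⟩ = F.toFun x ⟨n - 1, hn1d⟩ := (congrFun hFfix _).symm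
          _ = G.toFun y ⟨n, hnd⟩ := by
              rw [hFx, mkT_tail (by show ¬ n - 1 + 2 ≤ n; omega)]
      have h8 : y ⟨n - 1, hn1d⟩ = x ⟨n - 1, hn1d⟩ :=
        le_antisymm (hxy _) (by rw [h7]; exact hw'le)
      have h9 : y = x := by rw [hyeq, h8, ← hxeq]
      rw [← h9]
      exact hyfixΔ
  have hDesc : DescendingOn F A := by
    refine ⟨monotonePF_comp (monotonePF_comp (monotonePF_limDown _) hGmono)
      (monotonePF_total Cut_mono), fun x hx => (step x hx).1, ?_,
      fun x hx => ⟨(step x hx).2.1, (step x hx).2.2.1⟩⟩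
    intro C hCA hne hch
    haveI : Nonempty C := hne.to_subtype
    obtain ⟨c0, hc0⟩ := id hne
    constructor
    · refine ⟨sSup C, ⟨?_, ?_, ?_, ?_, ?_⟩, isLUB_sSup C⟩
      · intro i hi
        rw [sSup_apply]
        exact (iSup_congr fun c => (hCA c.2).1 i hi).trans iSup_const
      · intro i j hi hj
        rw [sSup_apply, sSup_apply]
        exact iSup_congr fun c => (hCA c.2).2.1 i j hi hj
      · refine le_trans (hCA hc0).2.2.1 ?_
        rw [sSup_apply]
        exact le_iSup (fun c : C => (c : Fin d → V) ⟨n - 1, hn1d⟩) ⟨c0, hc0⟩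
      · rw [sSup_apply]
        exact iSup_le fun c => (hCA c.2).2.2.2.1
      · intro i
        rw [Delta_apply_sSup hcont hne hch i, sSup_apply]
        exact iSup_mono fun c => (hCA c.2).2.2.2.2 i
    · refine ⟨sInf C, ⟨?_, ?_, ?_, ?_, ?_⟩, isGLB_sInf C⟩
      · intro i hi
        rw [sInf_apply]
        exact (iInf_congr fun c => (hCA c.2).1 i hi).trans iInf_const
      · intro i j hi hj
        rw [sInf_apply, sInf_apply]
        exact iInf_congr fun c => (hCA c.2).2.1 i j hi hj
      · rw [sInf_apply]
        exact le_iInf fun c => (hCA c.2).2.2.1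
      · refine le_trans ?_ (hCA hc0).2.2.2.1
        rw [sInf_apply]
        exact iInf_le (fun c : C => (c : Fin d → V) ⟨n - 1, hn1d⟩) ⟨c0, hc0⟩
      · intro i
        rw [Delta_apply_sInf hcont hne hch i, sInf_apply]
        exact iInf_mono fun c => (hCA c.2).2.2.2.2 i
  have hσA : Bid n τ ∈ A := by
    rw [hBid]
    refine ⟨fun i hi => mkT_prefix hi, mkT_nfixed, ?_, ?_, ?_⟩
    · rw [mkT_tail (by show ¬ n - 1 + 2 ≤ n; omega)]; exact hlbub
    · rw [mkT_tail (by show ¬ n - 1 + 2 ≤ n; omega)]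
    · intro i
      by_cases hi : i.1 + 2 ≤ n
      · rw [mkT_prefix hi, Delta_prefix_tau (fun i hi => mkT_prefix hi) hi, hsat i hi]
      · rw [mkT_tail hi, Delta_mkT_tail_eq (by omega)]
        exact hubδ
  obtain ⟨ρ, hρA, hρL⟩ := exists_gfp_below hDesc hσA
  have hρval : ((PFunc.total (Bid n)).comp (limDown F)).toFun τ = ρ := by
    show (limDown F).toFun (Bid n τ) = ρ
    exact limDown_toFun_eq hρL
  have hρfixF : F.toFun ρ = ρ := hρL.1.1.2
  have hρΔ : Delta δ ρ = ρ := (step ρ hρA).2.2.2 hρfixF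
  have hρeq : ρ = mkT n τ (ρ ⟨n - 1, hn1d⟩) := eq_mkT hρA.1 hρA.2.1 hn1 hn1d
  refine ⟨⟨Set.mem_univ _, ⟨ρ, hρL⟩⟩, ?_, ?_⟩
  · rw [hρval, hρeq]
    exact mkT_fixed_mem_SN hord
      (fun j hj hjo => le_trans (hlbOdd j hj hjo) hρA.2.2.1)
      (fun j hj hje => le_trans hρA.2.2.2.1 (hubEven j hj hje))
      (by rw [← hρeq]; exact hρΔ) (by omega)
  · intro i hi
    rw [hρval]
    exact hρA.1 i hi

end EvenStep
section Main

variable {V : Type u} [CompleteLattice V] {d : ℕ} {δ : (Fin d → V) → V}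

theorem baseCase (hmono : Monotone δ) (hcont : ChainContinuous δ)
    (hd : 1 ≤ d) (hde : Even d) (τ : Fin d → V) (hτ : τ ∈ SN δ d) :
    τ ∈ (PhiAux δ 0).dom ∧ (PhiAux δ 0).toFun τ ∈ SN δ (d + 1) ∧
    ∀ i : Fin d, i.1 + 2 ≤ d → (PhiAux δ 0).toFun τ i = τ i := by
  have hno : d % 2 = 0 := Nat.even_iff.mp hde
  have h2 : 2 ≤ d := by omega
  obtain ⟨hord, hfixτ, hsat, -, hEvenC⟩ := hτ
  have hn1d : d - 1 < d := by omega
  have hn2d : d - 2 < d := by omega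
  set lb : V := τ ⟨d - 2, hn2d⟩ with hlb
  have hlbOdd : ∀ j : Fin d, j.1 + 2 ≤ d → Odd (j.1 + 1) → τ j ≤ lb := by
    intro j hj hjo
    refine hord _ _ ?_
    show ParityLE (j.1 + 1) (d - 2 + 1)
    exact Or.inr (Or.inl ⟨hjo, Nat.odd_iff.mpr (by omega), by omega⟩)
  have hlbfix : Delta δ (mkT d τ lb) = mkT d τ lb := by
    funext i
    by_cases hi : i.1 + 2 ≤ d
    · rw [Delta_prefix_tau (fun i hi => mkT_prefix hi) hi, hsat i hi, mkT_prefix hi]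
    · rw [Delta_mkT_tail_eq (by omega), mkT_tail hi]
      exact delta_mkT_pivot hsat h2 (by omega)
  have hlbCl : ∀ z : Fin d → V, mkT d τ lb ≤ z → mkT d τ lb ≤ Delta δ z := by
    intro z hz
    calc mkT d τ lb = Delta δ (mkT d τ lb) := hlbfix.symm
      _ ≤ Delta δ z := Delta_mono hmono hz
  obtain ⟨ub, hBid, hlbub, hubEven, hubδ⟩ :
      ∃ ub, Bid d τ = mkT d τ ub ∧ lb ≤ ub ∧
        (∀ j : Fin d, j.1 + 2 ≤ d → Even (j.1 + 1) → ub ≤ τ j) ∧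
        δ (mkT d τ ub) ≤ ub := by
    by_cases hd2 : d = 2
    · subst hd2
      refine ⟨⊤, Bid_eq_mkT2, le_top, ?_, le_top⟩
      intro j hj hje
      have := Nat.even_iff.mp hje
      exact absurd this (by omega)
    · have h3 : 3 ≤ d := by omega
      have hstep : τ ⟨d - 2, by omega⟩ ≤ τ ⟨d - 3, by omega⟩ := by
        refine hord _ _ ?_
        show ParityLE (d - 2 + 1) (d - 3 + 1)
        exact Or.inl ⟨Nat.odd_iff.mpr (by omega), Nat.even_iff.mpr (by omega)⟩
      refine ⟨τ ⟨d - 3, by omega⟩, Bid_eq_mkT3 h3 (by omega), hstep, ?_,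
        delta_mkT_lo' hmono hsat h3 (by omega) hstep⟩
      intro j hj hje
      refine hord _ _ ?_
      show ParityLE (d - 3 + 1) (j.1 + 1)
      have := Nat.even_iff.mp hje
      exact Or.inr (Or.inr ⟨Nat.even_iff.mpr (by omega), hje, by omega⟩)
  have hΔσ : Delta δ (mkT d τ ub) ≤ mkT d τ ub := by
    intro i
    by_cases hi : i.1 + 2 ≤ d
    · rw [mkT_prefix hi, Delta_prefix_tau (fun i hi => mkT_prefix hi) hi, hsat i hi]
    · rw [mkT_tail hi, Delta_mkT_tail_eq (by omega)]
      exact hubδ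
  obtain ⟨ρ, hρB, hρL⟩ := kleene_down (Delta_mono hmono)
    (fun C hne hch => Delta_sInf hcont C hne hch) hΔσ
    (B := {z | (∀ i : Fin d, i.1 + 2 ≤ d → z i = τ i) ∧ IsNFixed d z ∧
      mkT d τ lb ≤ z})
    ⟨fun i hi => mkT_prefix hi, mkT_nfixed, mkT_mono hlbub⟩
    (fun z hz => ⟨fun i hi => by rw [Delta_prefix_tau hz.1 hi]; exact hsat i hi,
      fun i j hi hj => Delta_tail_eq hz.2.1 hi hj, hlbCl z hz.2.2⟩)
    (by
      intro C hCB hne hch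
      haveI : Nonempty C := hne.to_subtype
      refine ⟨?_, ?_, ?_⟩
      · intro i hi
        rw [sInf_apply]
        exact (iInf_congr fun c => (hCB c.2).1 i hi).trans iInf_const
      · intro i j hi hj
        rw [sInf_apply, sInf_apply]
        exact iInf_congr fun c => (hCB c.2).2.1 i j hi hj
      · exact le_sInf fun c hc => (hCB hc).2.2)
  have hP0 : PhiAux δ 0 = (PFunc.total (Bid d)).comp
      (limDown (PFunc.total (Delta δ))) := rfl
  have hval : (PhiAux δ 0).toFun τ = ρ := by
    rw [hP0]
    show (limDown (PFunc.total (Delta δ))).toFun (Bid d τ) = ρ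
    rw [hBid]
    exact limDown_toFun_eq hρL
  have hρfix : Delta δ ρ = ρ := hρL.1.1.2
  have hρeq : ρ = mkT d τ (ρ ⟨d - 1, hn1d⟩) := eq_mkT hρB.1 hρB.2.1 (by omega) hn1d
  have hρlb : lb ≤ ρ ⟨d - 1, hn1d⟩ := by
    have h5 := hρB.2.2 ⟨d - 1, hn1d⟩
    rwa [mkT_tail (by show ¬ d - 1 + 2 ≤ d; omega)] at h5
  have hρub : ρ ⟨d - 1, hn1d⟩ ≤ ub := by
    have h5 := hρL.1.2 ⟨d - 1, hn1d⟩
    rwa [mkT_tail (by show ¬ d - 1 + 2 ≤ d; omega)] at h5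
  refine ⟨⟨Set.mem_univ _, ?_⟩, ?_, ?_⟩
  · show Bid d τ ∈ (limDown (PFunc.total (Delta δ))).dom
    rw [hBid]
    exact ⟨ρ, hρL⟩
  · rw [hval, hρeq]
    exact mkT_fixed_mem_SN hord
      (fun j hj hjo => le_trans (hlbOdd j hj hjo) hρlb)
      (fun j hj hje => le_trans hρub (hubEven j hj hje))
      (by rw [← hρeq]; exact hρfix) (by omega)
  · intro i hi
    rw [hval]
    exact hρB.1 i hi

theorem mainInd (hd : 1 ≤ d) (hde : Even d)
    (hmono : Monotone δ) (hcont : ChainContinuous δ) :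
    ∀ k : ℕ, k < d → ∀ τ ∈ SN δ (d - k),
      τ ∈ (PhiAux δ k).dom ∧ (PhiAux δ k).toFun τ ∈ SN δ (d - k + 1) ∧
      ∀ i : Fin d, i.1 + 2 ≤ d - k → (PhiAux δ k).toFun τ i = τ i := by
  intro k
  induction k with
  | zero =>
    intro _ τ hτ
    simp only [Nat.sub_zero] at hτ ⊢
    exact baseCase hmono hcont hd hde τ hτ
  | succ k IH =>
    intro hk τ hτ
    have hn1 : 1 ≤ d - (k + 1) := by omega
    have hnd : d - (k + 1) < d := by omega
    have hdk : d - k = d - (k + 1) + 1 := by omega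
    have hG : ∀ y ∈ SN δ (d - (k + 1) + 1), y ∈ (PhiAux δ k).dom ∧
        (PhiAux δ k).toFun y ∈ SN δ (d - (k + 1) + 2) ∧
        ∀ i : Fin d, i.1 + 2 ≤ d - (k + 1) + 1 → (PhiAux δ k).toFun y i = y i := by
      intro y hy
      have h := IH (by omega) y (by rw [hdk]; exact hy)
      rw [hdk] at h
      exact h
    rcases Nat.even_or_odd (d - (k + 1)) with he | ho
    · have hP : PhiAux δ (k + 1) = (PFunc.total (Bid (d - (k + 1)))).comp
          (limDown (((limDown (PFunc.total (Delta δ))).comp (PhiAux δ k)).comp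
            (PFunc.total (Cut (d - (k + 1)))))) := by
        rw [PhiAux, if_neg (by have := Nat.even_iff.mp he; rw [Nat.odd_iff]; omega)]
      rw [hP]
      exact evenStep hmono hcont hn1 hnd he (PhiAux δ k) (phiAux_monotonePF δ k) hG τ hτ
    · have hP : PhiAux δ (k + 1) = (PFunc.total (Bid (d - (k + 1)))).comp
          (limUp (((limUp (PFunc.total (Delta δ))).comp (PhiAux δ k)).comp
            (PFunc.total (Cut (d - (k + 1)))))) := by
        rw [PhiAux, if_pos ho]
      rw [hP]
      exact oddStep hmono hcont hn1 hnd ho (PhiAux δ k) (phiAux_monotonePF δ k) hG τ hτ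

end Main
/-- For every `n ∈ {1,…,d}`: `S_n ⊆ dom(Φ_n)`, `Φ_n` maps `S_n`
into `S_{n+1}`, and `Φ_n` is `n`-stable on `S_n`. -/
theorem stmt11 {V : Type*} [CompleteLattice V] {d : ℕ} (hd : 1 ≤ d) (hde : Even d)
    (δ : (Fin d → V) → V) (hmono : Monotone δ) (hcont : ChainContinuous δ)
    (n : ℕ) (hn1 : 1 ≤ n) (hnd : n ≤ d) :
    SN δ n ⊆ (Phi δ n).dom ∧
    (∀ τ ∈ SN δ n, (Phi δ n).toFun τ ∈ SN δ (n + 1)) ∧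
    NStableOn (Phi δ n) n (SN δ n) := by
  have h := mainInd hd hde hmono hcont (d - n) (by omega)
  have hnn : d - (d - n) = n := by omega
  have h' : ∀ τ ∈ SN δ n, τ ∈ (Phi δ n).dom ∧ (Phi δ n).toFun τ ∈ SN δ (n + 1) ∧
      ∀ i : Fin d, i.1 + 2 ≤ n → (Phi δ n).toFun τ i = τ i := by
    intro τ hτ
    have h2 := h τ (by rw [hnn]; exact hτ)
    rw [hnn] at h2
    exact h2
  exact ⟨fun τ hτ => (h' τ hτ).1, fun τ hτ => (h' τ hτ).2.1,
    fun τ hτ => (h' τ hτ).1, fun τ hτ i hi => (h' τ hτ).2.2 i hi⟩
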